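/- With 𝒜 = [[A₁, B₁ᵀ, 0],[C₁, -A₂, B₂ᵀ],[0, C₂, A₃]] and the preconditioner 𝒫₂ = [[A₁,0,0],[C₁,S₂,0],[0,-C₂,S₃]], where S₂ = A₂ + C₁A₁⁻¹B₁ᵀ and S₃ = A₃ + C₂S₂⁻¹B₂ᵀ are invertible, the preconditioned matrix 𝒯 = 𝒫₂⁻¹𝒜 satisfies (𝒯 - I)²(𝒯 + I) = 0. -/

import Mathlib

open Matrix

lemma myFromColumns_add {R m n₁ n₂ : Type*} [AddCommMonoid R] (A : Matrix m n₁ R)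
    (B : Matrix m n₂ R) (C : Matrix m n₁ R) (D : Matrix m n₂ R) :
    fromCols A B + fromCols C D = fromCols (A + C) (B + D) := by
  ext _ (_ | _) <;> simp

lemma myFromRows_add {R m₁ m₂ n : Type*} [AddCommMonoid R] (A : Matrix m₁ n R)
    (B : Matrix m₂ n R) (C : Matrix m₁ n R) (D : Matrix m₂ n R) :
    fromRows A B + fromRows C D = fromRows (A + C) (B + D) := by
  ext (_ | _) _ <;> simp

lemma myKey {R m₁ m₂ m₃ : Type*} [CommRing R] [Fintype m₁] [Fintype m₂] [Fintype m₃]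
    (X : Matrix m₁ m₂ R) (Y : Matrix m₂ m₃ R) [DecidableEq m₁] [DecidableEq m₂]
    [DecidableEq m₃] (U : Matrix ((m₁ ⊕ m₂) ⊕ m₃) ((m₁ ⊕ m₂) ⊕ m₃) R)
    (hU : U = fromBlocks (fromBlocks 1 X 0 (-1)) (fromRows 0 Y) 0 1) :
    (U - 1) ^ 2 * (U + 1) = 0 := by
  have h2 : U * U = fromBlocks 1 (fromRows (X * Y) 0) 0 1 := by
    rw [hU]
    simp only [fromBlocks_multiply, fromBlocks_mul_fromRows, fromRows_mul,
      Matrix.mul_zero, Matrix.zero_mul, Matrix.mul_one, Matrix.one_mul, Matrix.mul_neg,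
      Matrix.neg_mul, add_zero, zero_add, neg_neg, neg_zero, myFromRows_add,
      fromRows_zero, fromBlocks_one, fromBlocks_zero]
    try (congr 1 <;> simp [fromBlocks_one])
  have h3 : U * (U * U) = fromBlocks (fromBlocks 1 X 0 (-1)) (fromRows (X * Y) Y) 0 1 := by
    rw [h2, hU]
    simp only [fromBlocks_multiply, fromBlocks_mul_fromRows, fromRows_mul,
      Matrix.mul_zero, Matrix.zero_mul, Matrix.mul_one, Matrix.one_mul, Matrix.mul_neg,
      Matrix.neg_mul, add_zero, zero_add, neg_neg, neg_zero, myFromRows_add,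
      fromRows_zero]
    try (congr 1 <;> simp [fromBlocks_one, fromBlocks_multiply])
  have h4 : (U - 1) ^ 2 * (U + 1) = U * (U * U) - U * U - U + 1 := by noncomm_ring
  rw [h4, h3, h2, hU]
  ext ((i | i) | i) ((j | j) | j) <;>
    simp [fromBlocks, fromRows_apply_inl, fromRows_apply_inr, Matrix.one_apply, Matrix.sub_apply, Matrix.add_apply] <;>
    try ring

theorem stmt_2 {K : Type*} [Field K] {n₁ n₂ n₃ : ℕ}
    (A₁ : Matrix (Fin n₁) (Fin n₁) K) (A₂ : Matrix (Fin n₂) (Fin n₂) K)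
    (A₃ : Matrix (Fin n₃) (Fin n₃) K)
    (B₁ C₁ : Matrix (Fin n₂) (Fin n₁) K) (B₂ C₂ : Matrix (Fin n₃) (Fin n₂) K)
    (hA₁ : IsUnit A₁)
    (S₂ : Matrix (Fin n₂) (Fin n₂) K) (hS₂def : S₂ = A₂ + C₁ * A₁⁻¹ * B₁ᵀ)
    (hS₂ : IsUnit S₂)
    (S₃ : Matrix (Fin n₃) (Fin n₃) K) (hS₃def : S₃ = A₃ + C₂ * S₂⁻¹ * B₂ᵀ)
    (hS₃ : IsUnit S₃)
    (𝒜 : Matrix ((Fin n₁ ⊕ Fin n₂) ⊕ Fin n₃) ((Fin n₁ ⊕ Fin n₂) ⊕ Fin n₃) K)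
    (h𝒜 : 𝒜 = fromBlocks (fromBlocks A₁ B₁ᵀ C₁ (-A₂)) (fromRows 0 B₂ᵀ)
      (fromCols 0 C₂) A₃)
    (P : Matrix ((Fin n₁ ⊕ Fin n₂) ⊕ Fin n₃) ((Fin n₁ ⊕ Fin n₂) ⊕ Fin n₃) K)
    (hP : P = fromBlocks (fromBlocks A₁ 0 C₁ S₂) 0 (fromCols 0 (-C₂)) S₃) :
    (P⁻¹ * 𝒜 - 1) ^ 2 * (P⁻¹ * 𝒜 + 1) = 0 := by
  have hA₁' : A₁⁻¹ * A₁ = 1 := nonsing_inv_mul A₁ ((isUnit_iff_isUnit_det _).mp hA₁)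
  have hA₁'' : A₁ * A₁⁻¹ = 1 := mul_nonsing_inv A₁ ((isUnit_iff_isUnit_det _).mp hA₁)
  have hS₂' : S₂⁻¹ * S₂ = 1 := nonsing_inv_mul S₂ ((isUnit_iff_isUnit_det _).mp hS₂)
  have hS₂'' : S₂ * S₂⁻¹ = 1 := mul_nonsing_inv S₂ ((isUnit_iff_isUnit_det _).mp hS₂)
  have hS₃' : S₃⁻¹ * S₃ = 1 := nonsing_inv_mul S₃ ((isUnit_iff_isUnit_det _).mp hS₃)
  -- explicit left inverse of P
  set L' : Matrix (Fin n₁ ⊕ Fin n₂) (Fin n₁ ⊕ Fin n₂) K :=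
    fromBlocks A₁⁻¹ 0 (-(S₂⁻¹ * C₁ * A₁⁻¹)) S₂⁻¹ with hL'
  set Q : Matrix ((Fin n₁ ⊕ Fin n₂) ⊕ Fin n₃) ((Fin n₁ ⊕ Fin n₂) ⊕ Fin n₃) K :=
    fromBlocks L' 0
      (fromCols (-(S₃⁻¹ * C₂ * S₂⁻¹ * C₁ * A₁⁻¹)) (S₃⁻¹ * C₂ * S₂⁻¹)) S₃⁻¹ with hQ
  have hQP : Q * P = 1 := by
    rw [hQ, hP, hL']
    simp only [fromBlocks_multiply, fromCols_mul_fromBlocks, Matrix.mul_zero,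
      Matrix.zero_mul, add_zero, zero_add, Matrix.mul_neg, Matrix.neg_mul, Matrix.mul_one]
    simp only [Matrix.mul_fromCols, Matrix.mul_zero, Matrix.mul_neg, myFromColumns_add, myFromRows_add,
      add_zero, zero_add, Matrix.mul_assoc, hA₁', hS₂', Matrix.mul_one, hS₃', neg_add_cancel,
      add_neg_cancel, fromCols_zero, fromBlocks_one]
  have hPinv : P⁻¹ = Q := inv_eq_left_inv hQP
  set T : Matrix ((Fin n₁ ⊕ Fin n₂) ⊕ Fin n₃) ((Fin n₁ ⊕ Fin n₂) ⊕ Fin n₃) K :=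
    fromBlocks (fromBlocks 1 (A₁⁻¹ * B₁ᵀ) 0 (-1)) (fromRows 0 (S₂⁻¹ * B₂ᵀ)) 0 1 with hT
  have e1 : A₁ * (A₁⁻¹ * B₁ᵀ) = B₁ᵀ := by
    rw [← Matrix.mul_assoc, hA₁'', Matrix.one_mul]
  have e2 : S₂ * (S₂⁻¹ * B₂ᵀ) = B₂ᵀ := by
    rw [← Matrix.mul_assoc, hS₂'', Matrix.one_mul]
  have e3 : C₁ * (A₁⁻¹ * B₁ᵀ) + -S₂ = -A₂ := by
    rw [hS₂def, ← Matrix.mul_assoc]; abel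
  have e4 : -(C₂ * (S₂⁻¹ * B₂ᵀ)) + S₃ = A₃ := by
    rw [hS₃def, ← Matrix.mul_assoc]; abel
  have hPT : P * T = 𝒜 := by
    rw [hP, hT, h𝒜]
    simp only [fromBlocks_multiply, fromBlocks_mul_fromRows, fromCols_mul_fromBlocks,
      fromCols_mul_fromRows, fromRows_mul, Matrix.mul_zero, Matrix.zero_mul,
      Matrix.mul_one, Matrix.one_mul, Matrix.mul_neg, Matrix.neg_mul, add_zero, zero_add,
      neg_neg, neg_zero, myFromRows_add, fromRows_zero, e1, e2, e3, e4]
  have hTA : P⁻¹ * 𝒜 = T := by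
    rw [hPinv, ← hPT, ← Matrix.mul_assoc, hQP, Matrix.one_mul]
  rw [hTA]
  exact myKey _ _ T hT
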